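/- Let L be a field and let f, g ∈ L[x] be monic polynomials with f = (x - a)² - b for some a, b ∈ L and g of degree n ≥ 1. Then disc(g ∘ f) = ± disc(g)² · 4^n · g(-b), i.e., disc(g ∘ f) equals disc(g)² · 4^n · g(-b) up to sign. -/

import Mathlib

open Polynomial

/-- For a polynomial `f` over a field `L`, the product `∏ f'(rᵢ)` over the roots `rᵢ`
of `f` in an algebraic closure of `L`.  For monic `f` of degree `n` this equals the
discriminant of `f` up to the sign `(-1)^(n(n-1)/2)`. -/
noncomputable def discUpToSign {L : Type*} [Field L] (f : L[X]) : AlgebraicClosure L :=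
  (((f.map (algebraMap L (AlgebraicClosure L))).roots).map
    fun r => ((f.map (algebraMap L (AlgebraicClosure L))).derivative).eval r).prod

section Aux

variable {K : Type*} [Field K] [IsAlgClosed K]

lemma quad_monic (a c : K) : ((X - C a) ^ 2 - C c).Monic := by
  rw [sub_eq_add_neg]
  refine Monic.add_of_left (monic_X_sub_C a |>.pow 2) ?_
  rw [degree_neg]
  refine lt_of_le_of_lt (degree_C_le) ?_
  rw [degree_pow, degree_X_sub_C]
  norm_num

lemma quad_natDegree (a c : K) : ((X - C a) ^ 2 - C c).natDegree = 2 := by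
  rw [natDegree_sub_C, natDegree_pow, natDegree_X_sub_C]

lemma quad_card (a c : K) : Multiset.card ((X - C a) ^ 2 - C c).roots = 2 := by
  rw [splits_iff_card_roots.mp (IsAlgClosed.splits _), quad_natDegree]

lemma quad_fac (a c : K) : (X - C a) ^ 2 - C c =
    (Multiset.map (fun r => X - C r) ((X - C a) ^ 2 - C c).roots).prod :=
  (IsAlgClosed.splits _).eq_prod_roots_of_monic (quad_monic a c)

lemma quad_prod_sub (a c : K) :
    (Multiset.map (fun r => r - a) ((X - C a) ^ 2 - C c).roots).prod = -c := by
  have h1 : (Multiset.map (fun r : K => a - r) ((X - C a) ^ 2 - C c).roots).prod = -c := by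
    have := congrArg (evalRingHom a) (quad_fac a c)
    rw [map_multiset_prod, Multiset.map_map] at this
    simp only [coe_evalRingHom, Function.comp_apply, eval_sub, eval_pow, eval_X, eval_C, sub_self, ne_eq,
      OfNat.ofNat_ne_zero, not_false_eq_true, zero_pow, zero_sub] at this
    exact this.symm
  calc (Multiset.map (fun r : K => r - a) ((X - C a) ^ 2 - C c).roots).prod
      = (Multiset.map (fun r : K => (-1) * (a - r)) ((X - C a) ^ 2 - C c).roots).prod := by
        apply congrArg; apply Multiset.map_congr rfl; intro r _; ring
    _ = -c := by
        rw [Multiset.prod_map_mul, Multiset.map_const', Multiset.prod_replicate, quad_card, h1]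
        ring

lemma quad_prod_deriv (a c : K) :
    (Multiset.map (fun r => 2 * (r - a)) ((X - C a) ^ 2 - C c).roots).prod = -(4 * c) := by
  rw [show (fun r : K => 2 * (r - a)) = fun r : K => (2 : K) * ((fun r : K => r - a) r) from rfl,
    Multiset.prod_map_mul, Multiset.map_const', Multiset.prod_replicate, quad_card,
    quad_prod_sub]
  ring

end Aux

/-- Let `L` be a field, `f = (x-a)² - b` and `g` monic of degree `n ≥ 1`.  Then
`disc(g ∘ f) = ± disc(g)² · 4ⁿ · g(-b)`; equivalently, squaring both sides (so that
the signs disappear), `disc(g∘f)² = (disc(g)² · 4ⁿ · g(-b))²`. -/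
theorem disc_comp_quadratic (L : Type*) [Field L] (a b : L) (g : L[X]) (hg : g.Monic)
    (n : ℕ) (hn : 1 ≤ n) (hgd : g.natDegree = n) :
    (discUpToSign (g.comp ((X - C a) ^ 2 - C b))) ^ 2 =
      ((discUpToSign g) ^ 2 * 4 ^ n *
        algebraMap L (AlgebraicClosure L) (g.eval (-b))) ^ 2 := by
  suffices h : discUpToSign (g.comp ((X - C a) ^ 2 - C b)) =
      (discUpToSign g) ^ 2 * 4 ^ n * algebraMap L (AlgebraicClosure L) (g.eval (-b)) by
    rw [h]
  simp only [discUpToSign]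
  set K := AlgebraicClosure L with hK
  set φ := algebraMap L K with hφ
  set F : K[X] := (X - C (φ a)) ^ 2 - C (φ b) with hFdef
  set G : K[X] := g.map φ with hGdef
  have hmap : (g.comp ((X - C a) ^ 2 - C b)).map φ = G.comp F := by
    rw [Polynomial.map_comp]
    simp [hFdef, Polynomial.map_sub, Polynomial.map_pow, Polynomial.map_X, Polynomial.map_C]
    rfl
  have hGm : G.Monic := hg.map φ
  have hGfac : G = (Multiset.map (fun s => X - C s) G.roots).prod :=
    (IsAlgClosed.splits _).eq_prod_roots_of_monic hGm
  have hScard : Multiset.card G.roots = n := by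
    rw [splits_iff_card_roots.mp (IsAlgClosed.splits _), hGdef, natDegree_map, hgd]
  have hFs : ∀ s : K, F - C s = (X - C (φ a)) ^ 2 - C (φ b + s) := by
    intro s; rw [hFdef, C_add]; ring
  have hcompfac : G.comp F = (Multiset.map (fun s => F - C s) G.roots).prod := by
    conv_lhs => rw [hGfac]
    rw [multiset_prod_comp, Multiset.map_map]
    congr 1
    apply Multiset.map_congr rfl
    intro s _
    simp
  have hroots : (G.comp F).roots = G.roots.bind (fun s => (F - C s).roots) := by
    rw [hcompfac, roots_multiset_prod, Multiset.bind_map]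
    intro h0
    obtain ⟨s, _, hs⟩ := Multiset.mem_map.mp h0
    have hmon : (F - C s).Monic := by rw [hFs s]; exact quad_monic _ _
    exact hmon.ne_zero hs
  have hdF : ∀ r : K, eval r (derivative F) = 2 * (r - φ a) := by
    intro r
    simp [hFdef, derivative_pow, derivative_sq]
    rw [derivative_sq]
    simp
  rw [hmap, hroots, Multiset.map_bind, Multiset.prod_bind]
  have hinner : ∀ s ∈ G.roots,
      ((F - C s).roots.map fun r => eval r (derivative (G.comp F))).prod
        = 4 * (-(φ b) - s) * (eval s (derivative G)) ^ 2 := by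
    intro s hs
    have hin : ∀ r ∈ (F - C s).roots, eval r (derivative (G.comp F)) =
        (2 * (r - φ a)) * ((fun _ : K => eval s (derivative G)) r) := by
      intro r hr
      have hFr : eval r F = s := by
        have h0 : eval r (F - C s) = 0 := isRoot_of_mem_roots hr
        rw [eval_sub, eval_C, sub_eq_zero] at h0
        exact h0
      rw [derivative_comp, eval_mul, eval_comp, hFr, hdF]
    rw [Multiset.map_congr rfl hin, Multiset.prod_map_mul, Multiset.map_const',
      Multiset.prod_replicate]
    have h2 : Multiset.card (F - C s).roots = 2 := by rw [hFs s]; exact quad_card _ _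
    have h3 : ((F - C s).roots.map fun r => 2 * (r - φ a)).prod = -(4 * (φ b + s)) := by
      rw [hFs s]; exact quad_prod_deriv _ _
    rw [h2, h3]
    ring
  rw [Multiset.map_congr rfl hinner]
  have hsplit : (G.roots.map fun s => 4 * (-(φ b) - s) * (eval s (derivative G)) ^ 2).prod
      = (G.roots.map fun s => 4 * (-(φ b) - s)).prod
        * (G.roots.map fun s => (eval s (derivative G)) ^ 2).prod := Multiset.prod_map_mul
  have hsplit2 : (G.roots.map fun s => 4 * (-(φ b) - s)).prod
      = (4 : K) ^ n * (G.roots.map fun s => -(φ b) - s).prod := by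
    rw [show (fun s : K => 4 * (-(φ b) - s))
        = fun s : K => ((fun _ : K => (4 : K)) s) * ((fun s : K => -(φ b) - s) s) from rfl,
      Multiset.prod_map_mul, Multiset.map_const', Multiset.prod_replicate, hScard]
  have hevalG : (G.roots.map fun s => -(φ b) - s).prod = φ (g.eval (-b)) := by
    have h1 := congrArg (evalRingHom (-(φ b))) hGfac
    rw [map_multiset_prod, Multiset.map_map] at h1
    simp only [coe_evalRingHom, Function.comp_apply, eval_sub, eval_X, eval_C] at h1
    rw [← h1, hGdef, ← map_neg φ b, eval_map, eval₂_at_apply]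
  have hpow : (G.roots.map fun s => (eval s (derivative G)) ^ 2).prod
      = ((G.roots.map fun s => eval s (derivative G)).prod) ^ 2 := Multiset.prod_map_pow
  rw [hsplit, hsplit2, hevalG, hpow]
  ring
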